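/- Under 2^2 split-plot randomization, the covariance estimator V̂_ht is conservative in expectation: E[V̂_ht] − Cov(Ŷ_ht) = W^{-1}·S_ht, which is positive semi-definite. -/

import Mathlib

open Finset Matrix Filter
open scoped Classical BigOperators

noncomputable section

namespace SplitPlotPaper

/-- The set of treatment combinations `T = {0,1} × {0,1}`, a pair of the levels of
factor A and factor B. -/
abbrev T : Type := Bool × Bool

section LS

variable {ι κ γ : Type*} [Fintype ι] [Fintype κ] [DecidableEq κ] [Fintype γ] [DecidableEq γ]

/-- The Gram matrix `Dᵀ Π D` of a (weighted) least-squares problem with design matrix `X`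
and weights `π`. -/
def gram (X : Matrix ι κ ℝ) (π : ι → ℝ) : Matrix κ κ ℝ :=
  Matrix.of fun k k' => ∑ i, π i * X i k * X i k'

/-- The (weighted) least-squares coefficient vector `(DᵀΠD)⁻¹ DᵀΠY`. -/
def lsCoef (X : Matrix ι κ ℝ) (π y : ι → ℝ) : κ → ℝ :=
  (gram X π)⁻¹.mulVec fun k => ∑ i, π i * X i k * y i

/-- Residuals of the (weighted) least-squares fit. -/
def lsResid (X : Matrix ι κ ℝ) (π y : ι → ℝ) (i : ι) : ℝ :=
  y i - ∑ k, X i k * lsCoef X π y k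

/-- The cluster-robust covariance matrix
`(DᵀΠD)⁻¹ (Σ_c D_cᵀΠ_c e_c e_cᵀ Π_c D_c) (DᵀΠD)⁻¹` for clustering map `c`. -/
def clusterCov (X : Matrix ι κ ℝ) (π y : ι → ℝ) (c : ι → γ) : Matrix κ κ ℝ :=
  (gram X π)⁻¹ *
    (Matrix.of fun k k' =>
      ∑ g : γ, (∑ i, if c i = g then π i * X i k * lsResid X π y i else 0) *
        (∑ i, if c i = g then π i * X i k' * lsResid X π y i else 0)) *
    (gram X π)⁻¹

/-- The heteroskedasticity-robust (sandwich) covariance matrix. -/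
def hcCov (X : Matrix ι κ ℝ) (π y : ι → ℝ) : Matrix κ κ ℝ :=
  (gram X π)⁻¹ *
    (Matrix.of fun k k' => ∑ i, (π i) ^ 2 * (lsResid X π y i) ^ 2 * X i k * X i k') *
    (gram X π)⁻¹

end LS

/-- A `2²` split-plot design: `W = W0 + W1` whole-plots, whole-plot `w` containing
`M w = M0 w + M1 w` sub-plots, together with fixed potential outcomes `Y`. -/
structure Design where
  W0 : ℕ
  W1 : ℕ
  hW0 : 2 ≤ W0
  hW1 : 2 ≤ W1
  M0 : Fin (W0 + W1) → ℕ
  M1 : Fin (W0 + W1) → ℕ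
  hM0 : ∀ w, 2 ≤ M0 w
  hM1 : ∀ w, 2 ≤ M1 w
  Y : (w : Fin (W0 + W1)) → Fin (M0 w + M1 w) → T → ℝ

namespace Design

variable (d : Design)

/-- Number of whole-plots. -/
abbrev W : ℕ := d.W0 + d.W1

/-- Size of whole-plot `w`. -/
abbrev M (w : Fin d.W) : ℕ := d.M0 w + d.M1 w

/-- Total number of units. -/
def N : ℕ := ∑ w, d.M w

/-- Number of whole-plots assigned level `a` of factor A. -/
def Wa (a : Bool) : ℕ := if a then d.W1 else d.W0

/-- Number of units of whole-plot `w` assigned level `b` of factor B. -/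
def Mb (w : Fin d.W) (b : Bool) : ℕ := if b then d.M1 w else d.M0 w

/-- `p_a = W_a / W`. -/
def p (a : Bool) : ℝ := (d.Wa a : ℝ) / (d.W : ℝ)

/-- `q_{wb} = M_{wb} / M_w`. -/
def q (w : Fin d.W) (b : Bool) : ℝ := (d.Mb w b : ℝ) / (d.M w : ℝ)

/-- Inclusion probability `p_{ws}(z) = p_a q_{wb}` for `z = (a,b)`. -/
def prob (w : Fin d.W) (z : T) : ℝ := d.p z.1 * d.q w z.2

/-- Whole-plot size factor `α_w = W M_w / N`. -/
def alpha (w : Fin d.W) : ℝ := (d.W : ℝ) * (d.M w : ℝ) / (d.N : ℝ)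

/-- An assignment: a level of factor A for each whole-plot and a level of factor B
for each unit. -/
abbrev Assign : Type := (Fin d.W → Bool) × ((w : Fin d.W) → Fin (d.M w) → Bool)

/-- The set of assignments realizable under split-plot randomization: exactly `W1`
whole-plots receive level 1 of factor A, and exactly `M1 w` units of whole-plot `w`
receive level 1 of factor B.  Split-plot randomization is uniform on this set. -/
def Ω : Finset d.Assign :=
  Finset.univ.filter fun ω =>
    ((Finset.univ.filter fun w => ω.1 w = true).card = d.W1) ∧
    (∀ w, (Finset.univ.filter fun s => ω.2 w s = true).card = d.M1 w)

/-- Design-based expectation: average over the uniform distribution on `Ω`. -/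
def expect (f : d.Assign → ℝ) : ℝ := (∑ ω ∈ d.Ω, f ω) / (d.Ω.card : ℝ)

/-- Design-based covariance. -/
def cov (f g : d.Assign → ℝ) : ℝ :=
  d.expect (fun ω => f ω * g ω) - d.expect f * d.expect g

/-- Conditional expectation given an event `E` on assignments. -/
def cexpect (E : d.Assign → Prop) (f : d.Assign → ℝ) : ℝ :=
  (∑ ω ∈ d.Ω.filter E, f ω) / ((d.Ω.filter E).card : ℝ)

/-- Conditional covariance given an event `E` on assignments. -/
def ccov (E : d.Assign → Prop) (f g : d.Assign → ℝ) : ℝ :=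
  d.cexpect E (fun ω => f ω * g ω) - d.cexpect E f * d.cexpect E g

/-- Treatment `Z_{ws} = (A_w, B_{ws})` received by unit `(w,s)`. -/
def Z (ω : d.Assign) (w : Fin d.W) (s : Fin (d.M w)) : T := (ω.1 w, ω.2 w s)

/-- Observed outcome `Y_{ws} = Y_{ws}(Z_{ws})`. -/
def Yobs (ω : d.Assign) (w : Fin d.W) (s : Fin (d.M w)) : ℝ := d.Y w s (d.Z ω w s)

/-- Horvitz–Thompson estimator `Ŷ_ht(z)`. -/
def Yht (ω : d.Assign) (z : T) : ℝ :=
  (d.N : ℝ)⁻¹ * ∑ w, ∑ s, if d.Z ω w s = z then (d.prob w z)⁻¹ * d.Yobs ω w s else 0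

/-- `1̂_ht(z)`: the Horvitz–Thompson estimator of the constant 1. -/
def oneHt (ω : d.Assign) (z : T) : ℝ :=
  (d.N : ℝ)⁻¹ * ∑ w, ∑ s, if d.Z ω w s = z then (d.prob w z)⁻¹ else 0

/-- Hajek estimator `Ŷ_haj(z) = Ŷ_ht(z)/1̂_ht(z)`. -/
def Yhaj (ω : d.Assign) (z : T) : ℝ := d.Yht ω z / d.oneHt ω z

/-- Sample-mean estimator `Ŷ_sm(z)`. -/
def Ysm (ω : d.Assign) (z : T) : ℝ :=
  (∑ w, ∑ s, if d.Z ω w s = z then d.Yobs ω w s else 0) /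
    (∑ w, ∑ s, if d.Z ω w s = z then (1 : ℝ) else 0)

/-- Whole-plot sample mean `Ŷ_w(z)` (zero when whole-plot `w` has no units under `z`). -/
def Yw (ω : d.Assign) (w : Fin d.W) (z : T) : ℝ :=
  (d.Mb w z.2 : ℝ)⁻¹ * ∑ s, if d.Z ω w s = z then d.Yobs ω w s else 0

/-- Scaled whole-plot sample mean `Û_w(z) = α_w Ŷ_w(z)`. -/
def Uw (ω : d.Assign) (w : Fin d.W) (z : T) : ℝ := d.alpha w * d.Yw ω w z

/-- Finite-population average `Ȳ(z)`. -/
def Ybar (z : T) : ℝ := (d.N : ℝ)⁻¹ * ∑ w, ∑ s, d.Y w s z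

/-- Whole-plot average potential outcome `Ȳ_w(z)`. -/
def Ybarw (w : Fin d.W) (z : T) : ℝ := (d.M w : ℝ)⁻¹ * ∑ s, d.Y w s z

/-- Scaled whole-plot total `U_w(z) = α_w Ȳ_w(z)`. -/
def U (w : Fin d.W) (z : T) : ℝ := d.alpha w * d.Ybarw w z

/-- Between whole-plot covariance `S_ht(z,z')`. -/
def Sht (z z' : T) : ℝ :=
  ((d.W : ℝ) - 1)⁻¹ *
    ∑ w, (d.alpha w * d.Ybarw w z - d.Ybar z) * (d.alpha w * d.Ybarw w z' - d.Ybar z')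

/-- Between whole-plot covariance `S_haj(z,z')`. -/
def Shaj (z z' : T) : ℝ :=
  ((d.W : ℝ) - 1)⁻¹ *
    ∑ w, (d.alpha w) ^ 2 * (d.Ybarw w z - d.Ybar z) * (d.Ybarw w z' - d.Ybar z')

/-- Within whole-plot covariance `S_w(z,z')`. -/
def Sw (w : Fin d.W) (z z' : T) : ℝ :=
  ((d.M w : ℝ) - 1)⁻¹ * (d.alpha w) ^ 2 *
    ∑ s, (d.Y w s z - d.Ybarw w z) * (d.Y w s z' - d.Ybarw w z')

/-- Entry `(z,z')` of `H = diag(p₀⁻¹,p₁⁻¹) ⊗ J₂ − J₄`. -/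
def Hmat (z z' : T) : ℝ := (if z.1 = z'.1 then (d.p z.1)⁻¹ else 0) - 1

/-- Entry `(z,z')` of `H_w = diag(p₀⁻¹,p₁⁻¹) ⊗ (diag(q_{w0}⁻¹,q_{w1}⁻¹) − J₂)`,
i.e. `1(a=a')·p_a⁻¹·(q_{wb}⁻¹·1(z=z') − 1)`. -/
def Hw (w : Fin d.W) (z z' : T) : ℝ :=
  if z.1 = z'.1 then (d.p z.1)⁻¹ * ((if z = z' then (d.q w z.2)⁻¹ else 0) - 1) else 0

/-- `Ψ(z,z') = W⁻¹ Σ_w M_w⁻¹ H_w(z,z') S_w(z,z')`. -/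
def Psi (z z' : T) : ℝ := (d.W : ℝ)⁻¹ * ∑ w, (d.M w : ℝ)⁻¹ * d.Hw w z z' * d.Sw w z z'

/-- Sample analog `Ŝ_ht(z,z')` (for `z,z'` sharing the same A-level `z.1`). -/
def ShtHat (ω : d.Assign) (z z' : T) : ℝ :=
  ((d.Wa z.1 : ℝ) - 1)⁻¹ *
    ∑ w, if ω.1 w = z.1 then
        (d.alpha w * d.Yw ω w z - d.Yht ω z) * (d.alpha w * d.Yw ω w z' - d.Yht ω z')
      else 0

/-- Sample analog `Ŝ_haj(z,z')` (for `z,z'` sharing the same A-level `z.1`). -/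
def ShajHat (ω : d.Assign) (z z' : T) : ℝ :=
  ((d.Wa z.1 : ℝ) - 1)⁻¹ *
    ∑ w, if ω.1 w = z.1 then
        (d.alpha w) ^ 2 * (d.Yw ω w z - d.Yhaj ω z) * (d.Yw ω w z' - d.Yhaj ω z')
      else 0

/-- Covariance estimator `V̂_ht` (block-diagonal in the A-levels). -/
def Vht (ω : d.Assign) : Matrix T T ℝ :=
  Matrix.of fun z z' => if z.1 = z'.1 then (d.Wa z.1 : ℝ)⁻¹ * d.ShtHat ω z z' else 0

/-- Covariance estimator `V̂_haj` (block-diagonal in the A-levels). -/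
def Vhaj (ω : d.Assign) : Matrix T T ℝ :=
  Matrix.of fun z z' => if z.1 = z'.1 then (d.Wa z.1 : ℝ)⁻¹ * d.ShajHat ω z z' else 0

/-- Index set of units. -/
abbrev Idx : Type := (w : Fin d.W) × Fin (d.M w)

/-- Design matrix of the unit regression on the four treatment indicators. -/
def Dunit (ω : d.Assign) : Matrix d.Idx T ℝ :=
  Matrix.of fun i z => if d.Z ω i.1 i.2 = z then 1 else 0

/-- Observed outcome vector, indexed by units. -/
def Yv (ω : d.Assign) : d.Idx → ℝ := fun i => d.Yobs ω i.1 i.2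

/-- Inverse-probability weights `p_{ws}(Z_{ws})⁻¹`. -/
def wgt (ω : d.Assign) : d.Idx → ℝ := fun i => (d.prob i.1 (d.Z ω i.1 i.2))⁻¹

/-- Index set of the aggregate regression: pairs `(w,b)`. -/
abbrev AgIdx : Type := Fin d.W × Bool

/-- Design matrix of the aggregate regression on the four treatment indicators. -/
def Dag (ω : d.Assign) : Matrix d.AgIdx T ℝ :=
  Matrix.of fun i z => if (ω.1 i.1, i.2) = z then 1 else 0

/-- Outcome vector of the aggregate regression: `Û_w((A_w, b))`. -/
def Uag (ω : d.Assign) : d.AgIdx → ℝ := fun i => d.Uw ω i.1 (ω.1 i.1, i.2)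

/-- Clustering of units by whole-plot. -/
def clUnit : d.Idx → Fin d.W := fun i => i.1

/-- Clustering of aggregate observations by whole-plot. -/
def clAg : d.AgIdx → Fin d.W := fun i => i.1

/-- OLS coefficients `β_ols` of the unit regression. -/
def betaOls (ω : d.Assign) : T → ℝ := lsCoef (d.Dunit ω) (fun _ => 1) (d.Yv ω)

/-- WLS coefficients `β_wls` of the unit regression with inverse probability weights. -/
def betaWls (ω : d.Assign) : T → ℝ := lsCoef (d.Dunit ω) (d.wgt ω) (d.Yv ω)

/-- OLS coefficients `β_ag` of the aggregate regression. -/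
def betaAg (ω : d.Assign) : T → ℝ := lsCoef (d.Dag ω) (fun _ => 1) (d.Uag ω)

/-- Cluster-robust covariance `Ṽ_ols` of the unweighted unit regression. -/
def Vols (ω : d.Assign) : Matrix T T ℝ :=
  clusterCov (d.Dunit ω) (fun _ => 1) (d.Yv ω) d.clUnit

/-- Cluster-robust covariance `Ṽ_wls` of the weighted unit regression. -/
def Vwls (ω : d.Assign) : Matrix T T ℝ :=
  clusterCov (d.Dunit ω) (d.wgt ω) (d.Yv ω) d.clUnit

/-- Cluster-robust covariance `Ṽ_ag` of the aggregate regression. -/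
def VagCR (ω : d.Assign) : Matrix T T ℝ :=
  clusterCov (d.Dag ω) (fun _ => 1) (d.Uag ω) d.clAg

section Covariates

variable {J : ℕ}

/-- Horvitz–Thompson estimator of the covariate means. -/
def xht (x : (w : Fin d.W) → Fin (d.M w) → Fin J → ℝ) (ω : d.Assign) (z : T) (j : Fin J) : ℝ :=
  (d.N : ℝ)⁻¹ * ∑ w, ∑ s, if d.Z ω w s = z then (d.prob w z)⁻¹ * x w s j else 0

/-- Hajek estimator of the covariate means. -/
def xhaj (x : (w : Fin d.W) → Fin (d.M w) → Fin J → ℝ) (ω : d.Assign) (z : T) (j : Fin J) : ℝ :=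
  d.xht x ω z j / d.oneHt ω z

/-- Sample-mean estimator of the covariate means. -/
def xsm (x : (w : Fin d.W) → Fin (d.M w) → Fin J → ℝ) (ω : d.Assign) (z : T) (j : Fin J) : ℝ :=
  (∑ w, ∑ s, if d.Z ω w s = z then x w s j else 0) /
    (∑ w, ∑ s, if d.Z ω w s = z then (1 : ℝ) else 0)

/-- Whole-plot sample mean of the covariates `x̂_w(z)`. -/
def xw (x : (w : Fin d.W) → Fin (d.M w) → Fin J → ℝ) (ω : d.Assign) (w : Fin d.W) (z : T)
    (j : Fin J) : ℝ :=
  (d.Mb w z.2 : ℝ)⁻¹ * ∑ s, if d.Z ω w s = z then x w s j else 0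

/-- Scaled whole-plot covariate total `v̂_w(z) = α_w x̂_w(z)`. -/
def vw (x : (w : Fin d.W) → Fin (d.M w) → Fin J → ℝ) (ω : d.Assign) (w : Fin d.W) (z : T)
    (j : Fin J) : ℝ :=
  d.alpha w * d.xw x ω w z j

/-- Design matrix of the additive covariate-adjusted unit regression. -/
def DunitF (x : (w : Fin d.W) → Fin (d.M w) → Fin J → ℝ) (ω : d.Assign) :
    Matrix d.Idx (T ⊕ Fin J) ℝ :=
  Matrix.of fun i k =>
    Sum.elim (fun z => if d.Z ω i.1 i.2 = z then (1 : ℝ) else 0) (fun j => x i.1 i.2 j) k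

/-- Design matrix of the additive covariate-adjusted aggregate regression. -/
def DagF (x : (w : Fin d.W) → Fin (d.M w) → Fin J → ℝ) (ω : d.Assign) :
    Matrix d.AgIdx (T ⊕ Fin J) ℝ :=
  Matrix.of fun i k =>
    Sum.elim (fun z => if (ω.1 i.1, i.2) = z then (1 : ℝ) else 0)
      (fun j => d.vw x ω i.1 (ω.1 i.1, i.2) j) k

/-- Design matrix of the fully-interacted covariate-adjusted unit regression. -/
def DunitL (x : (w : Fin d.W) → Fin (d.M w) → Fin J → ℝ) (ω : d.Assign) :
    Matrix d.Idx (T ⊕ T × Fin J) ℝ :=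
  Matrix.of fun i k =>
    Sum.elim (fun z => if d.Z ω i.1 i.2 = z then (1 : ℝ) else 0)
      (fun zj => if d.Z ω i.1 i.2 = zj.1 then x i.1 i.2 zj.2 else 0) k

/-- Design matrix of the fully-interacted covariate-adjusted aggregate regression. -/
def DagL (x : (w : Fin d.W) → Fin (d.M w) → Fin J → ℝ) (ω : d.Assign) :
    Matrix d.AgIdx (T ⊕ T × Fin J) ℝ :=
  Matrix.of fun i k =>
    Sum.elim (fun z => if (ω.1 i.1, i.2) = z then (1 : ℝ) else 0)
      (fun zj => if (ω.1 i.1, i.2) = zj.1 then d.vw x ω i.1 (ω.1 i.1, i.2) zj.2 else 0) k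

end Covariates

/-- Centered factor-A indicator `A_w − 1/2`. -/
def Ac (ω : d.Assign) (w : Fin d.W) : ℝ := (if ω.1 w then 1 else 0) - 1 / 2

/-- Centered factor-B indicator `B_{ws} − 1/2`. -/
def Bcu (ω : d.Assign) (i : d.Idx) : ℝ := (if ω.2 i.1 i.2 then 1 else 0) - 1 / 2

/-- Design matrix of the factor-based unit regression
`Y ~ 1 + (A−1/2) + (B−1/2) + (A−1/2)(B−1/2)`. -/
def Funit (ω : d.Assign) : Matrix d.Idx (Fin 4) ℝ :=
  Matrix.of fun i => ![1, d.Ac ω i.1, d.Bcu ω i, d.Ac ω i.1 * d.Bcu ω i]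

/-- Design matrix of the factor-based aggregate regression
`Û ~ 1 + (A−1/2) + (b−1/2) + (A−1/2)(b−1/2)`. -/
def Fag (ω : d.Assign) : Matrix d.AgIdx (Fin 4) ℝ :=
  Matrix.of fun i =>
    ![1, d.Ac ω i.1, (if i.2 then 1 else 0) - 1 / 2,
      d.Ac ω i.1 * ((if i.2 then 1 else 0) - 1 / 2)]

end Design

/-- The contrast matrix `G₀` with rows `g_A`, `g_B`, `g_AB`. -/
def G0 : Matrix (Fin 3) T ℝ :=
  Matrix.of fun k z =>
    ![(if z.1 then (1 : ℝ) else -1) / 2,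
      (if z.2 then (1 : ℝ) else -1) / 2,
      (if z.1 then (-1 : ℝ) else 1) * (if z.2 then (-1 : ℝ) else 1)] k




section Counting
variable {ι : Type*} [Fintype ι] [DecidableEq ι]

/-- the set of `true` coordinates of a boolean function. -/
def cnt (f : ι → Bool) : Finset ι := univ.filter fun i => f i = true

lemma cnt_ofSet (t : Finset ι) : cnt (fun x => decide (x ∈ t)) = t := by
  ext x; simp [cnt]

lemma ofSet_cnt (f : ι → Bool) : (fun x => decide (x ∈ cnt f)) = f := by
  funext x; simp [cnt]

lemma card_bfun (n : ℕ) :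
    (univ.filter fun f : ι → Bool => (cnt f).card = n).card = (Fintype.card ι).choose n := by
  rw [← card_univ, ← card_powersetCard]
  refine Finset.card_bij' (fun f _ => cnt f) (fun t _ => fun x => decide (x ∈ t)) ?_ ?_ ?_ ?_
  · intro f hf
    simp only [mem_filter, mem_univ, true_and] at hf
    simp [mem_powersetCard, hf]
  · intro t ht
    simp only [mem_powersetCard] at ht
    simp [cnt_ofSet, ht.2]
  · intro f _; exact ofSet_cnt f
  · intro t _; exact cnt_ofSet t

lemma card_bfun_true (n : ℕ) (hn : 1 ≤ n) (i₀ : ι) :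
    (univ.filter fun f : ι → Bool => (cnt f).card = n ∧ f i₀ = true).card
      = (Fintype.card ι - 1).choose (n - 1) := by
  have hc : (univ.erase i₀).card = Fintype.card ι - 1 := by
    rw [card_erase_of_mem (mem_univ i₀), card_univ]
  rw [← hc, ← card_powersetCard]
  refine Finset.card_bij' (fun f _ => (cnt f).erase i₀)
    (fun t _ => fun x => decide (x ∈ insert i₀ t)) ?_ ?_ ?_ ?_
  · intro f hf
    simp only [mem_filter, mem_univ, true_and] at hf
    have hi : i₀ ∈ cnt f := by simp [cnt, hf.2]
    rw [mem_powersetCard]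
    refine ⟨fun x hx => by simp [mem_erase.mp hx |>.1], ?_⟩
    rw [card_erase_of_mem hi, hf.1]
  · intro t ht
    rw [mem_powersetCard] at ht
    have hi : i₀ ∉ t := fun h => (mem_erase.mp (ht.1 h)).1 rfl
    simp only [mem_filter, mem_univ, true_and]
    constructor
    · rw [cnt_ofSet, card_insert_of_notMem hi, ht.2]; omega
    · simp
  · intro f hf
    simp only [mem_filter, mem_univ, true_and] at hf
    have hi : i₀ ∈ cnt f := by simp [cnt, hf.2]
    show (fun x => decide (x ∈ insert i₀ ((cnt f).erase i₀))) = f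
    rw [insert_erase hi]; exact ofSet_cnt f
  · intro t ht
    rw [mem_powersetCard] at ht
    have hi : i₀ ∉ t := fun h => (mem_erase.mp (ht.1 h)).1 rfl
    show (cnt (fun x => decide (x ∈ insert i₀ t))).erase i₀ = t
    rw [cnt_ofSet, erase_insert hi]

lemma card_bfun_false (n : ℕ) (i₀ : ι) :
    (univ.filter fun f : ι → Bool => (cnt f).card = n ∧ f i₀ = false).card
      = (Fintype.card ι - 1).choose n := by
  have hc : (univ.erase i₀).card = Fintype.card ι - 1 := by
    rw [card_erase_of_mem (mem_univ i₀), card_univ]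
  rw [← hc, ← card_powersetCard]
  refine Finset.card_bij' (fun f _ => cnt f) (fun t _ => fun x => decide (x ∈ t)) ?_ ?_ ?_ ?_
  · intro f hf
    simp only [mem_filter, mem_univ, true_and] at hf
    rw [mem_powersetCard]
    refine ⟨fun x hx => ?_, hf.1⟩
    simp only [cnt, mem_filter] at hx
    simp only [mem_erase, mem_univ, and_true]
    rintro rfl; rw [hf.2] at hx; simp at hx
  · intro t ht
    rw [mem_powersetCard] at ht
    have hi : i₀ ∉ t := fun h => (mem_erase.mp (ht.1 h)).1 rfl
    simp only [mem_filter, mem_univ, true_and]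
    exact ⟨by rw [cnt_ofSet, ht.2], by simp [hi]⟩
  · intro f _; exact ofSet_cnt f
  · intro t _; exact cnt_ofSet t


variable {ι : Type*} [Fintype ι] [DecidableEq ι]

lemma erase2_card (i₀ i₁ : ι) (h01 : i₀ ≠ i₁) :
    ((univ.erase i₀).erase i₁).card = Fintype.card ι - 2 := by
  rw [card_erase_of_mem (by simp [Ne.symm h01]), card_erase_of_mem (mem_univ i₀), card_univ]
  omega

lemma card_bfun_TT (n : ℕ) (hn : 2 ≤ n) {i₀ i₁ : ι} (h01 : i₀ ≠ i₁) :
    (univ.filter fun f : ι → Bool => (cnt f).card = n ∧ f i₀ = true ∧ f i₁ = true).card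
      = (Fintype.card ι - 2).choose (n - 2) := by
  rw [← erase2_card i₀ i₁ h01, ← card_powersetCard]
  refine Finset.card_bij' (fun f _ => ((cnt f).erase i₀).erase i₁)
    (fun t _ => fun x => decide (x ∈ insert i₀ (insert i₁ t))) ?_ ?_ ?_ ?_
  · intro f hf
    simp only [mem_filter, mem_univ, true_and] at hf
    have h0 : i₀ ∈ cnt f := by simp [cnt, hf.2.1]
    have h1 : i₁ ∈ (cnt f).erase i₀ := by simp [cnt, hf.2.2, Ne.symm h01]
    rw [mem_powersetCard]
    refine ⟨fun x hx => by
      simp only [mem_erase] at hx ⊢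
      exact ⟨hx.1, hx.2.1, mem_univ x⟩, ?_⟩
    rw [card_erase_of_mem h1, card_erase_of_mem h0, hf.1]
    omega
  · intro t ht
    rw [mem_powersetCard] at ht
    have h0 : i₀ ∉ t := fun h => (mem_erase.mp (mem_erase.mp (ht.1 h)).2).1 rfl
    have h1 : i₁ ∉ t := fun h => (mem_erase.mp (ht.1 h)).1 rfl
    simp only [mem_filter, mem_univ, true_and]
    refine ⟨?_, by simp, by simp [Ne.symm h01, h1]⟩
    rw [cnt_ofSet, card_insert_of_notMem (by simp [h01, h0]),
      card_insert_of_notMem h1, ht.2]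
    omega
  · intro f hf
    simp only [mem_filter, mem_univ, true_and] at hf
    have h0 : i₀ ∈ cnt f := by simp [cnt, hf.2.1]
    have h1 : i₁ ∈ (cnt f).erase i₀ := by simp [cnt, hf.2.2, Ne.symm h01]
    show (fun x => decide (x ∈ insert i₀ (insert i₁ (((cnt f).erase i₀).erase i₁)))) = f
    rw [insert_erase h1, insert_erase h0]; exact ofSet_cnt f
  · intro t ht
    rw [mem_powersetCard] at ht
    have h0 : i₀ ∉ t := fun h => (mem_erase.mp (mem_erase.mp (ht.1 h)).2).1 rfl
    have h1 : i₁ ∉ t := fun h => (mem_erase.mp (ht.1 h)).1 rfl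
    show ((cnt (fun x => decide (x ∈ insert i₀ (insert i₁ t)))).erase i₀).erase i₁ = t
    rw [cnt_ofSet, erase_insert (by simp [h01, h0]), erase_insert h1]

lemma card_bfun_TF (n : ℕ) (hn : 1 ≤ n) {i₀ i₁ : ι} (h01 : i₀ ≠ i₁) :
    (univ.filter fun f : ι → Bool => (cnt f).card = n ∧ f i₀ = true ∧ f i₁ = false).card
      = (Fintype.card ι - 2).choose (n - 1) := by
  rw [← erase2_card i₀ i₁ h01, ← card_powersetCard]
  refine Finset.card_bij' (fun f _ => (cnt f).erase i₀)
    (fun t _ => fun x => decide (x ∈ insert i₀ t)) ?_ ?_ ?_ ?_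
  · intro f hf
    simp only [mem_filter, mem_univ, true_and] at hf
    have h0 : i₀ ∈ cnt f := by simp [cnt, hf.2.1]
    have h1 : i₁ ∉ cnt f := by simp [cnt, hf.2.2]
    rw [mem_powersetCard]
    refine ⟨fun x hx => ?_, by rw [card_erase_of_mem h0, hf.1]⟩
    simp only [mem_erase] at hx ⊢
    exact ⟨fun h => h1 (h ▸ hx.2), hx.1, mem_univ x⟩
  · intro t ht
    rw [mem_powersetCard] at ht
    have h0 : i₀ ∉ t := fun h => (mem_erase.mp (mem_erase.mp (ht.1 h)).2).1 rfl
    have h1 : i₁ ∉ t := fun h => (mem_erase.mp (ht.1 h)).1 rfl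
    simp only [mem_filter, mem_univ, true_and]
    refine ⟨?_, by simp, by simp [Ne.symm h01, h1]⟩
    rw [cnt_ofSet, card_insert_of_notMem h0, ht.2]; omega
  · intro f hf
    simp only [mem_filter, mem_univ, true_and] at hf
    have h0 : i₀ ∈ cnt f := by simp [cnt, hf.2.1]
    show (fun x => decide (x ∈ insert i₀ ((cnt f).erase i₀))) = f
    rw [insert_erase h0]; exact ofSet_cnt f
  · intro t ht
    rw [mem_powersetCard] at ht
    have h0 : i₀ ∉ t := fun h => (mem_erase.mp (mem_erase.mp (ht.1 h)).2).1 rfl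
    show (cnt (fun x => decide (x ∈ insert i₀ t))).erase i₀ = t
    rw [cnt_ofSet, erase_insert h0]

lemma card_bfun_FT (n : ℕ) (hn : 1 ≤ n) {i₀ i₁ : ι} (h01 : i₀ ≠ i₁) :
    (univ.filter fun f : ι → Bool => (cnt f).card = n ∧ f i₀ = false ∧ f i₁ = true).card
      = (Fintype.card ι - 2).choose (n - 1) := by
  have he : (univ.filter fun f : ι → Bool => (cnt f).card = n ∧ f i₀ = false ∧ f i₁ = true)
      = (univ.filter fun f : ι → Bool => (cnt f).card = n ∧ f i₁ = true ∧ f i₀ = false) := by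
    apply filter_congr; intro f _; simp [and_comm (a := f i₀ = false)]
  rw [he]; exact card_bfun_TF n hn h01.symm

lemma card_bfun_FF (n : ℕ) {i₀ i₁ : ι} (h01 : i₀ ≠ i₁) :
    (univ.filter fun f : ι → Bool => (cnt f).card = n ∧ f i₀ = false ∧ f i₁ = false).card
      = (Fintype.card ι - 2).choose n := by
  rw [← erase2_card i₀ i₁ h01, ← card_powersetCard]
  refine Finset.card_bij' (fun f _ => cnt f) (fun t _ => fun x => decide (x ∈ t)) ?_ ?_ ?_ ?_
  · intro f hf
    simp only [mem_filter, mem_univ, true_and] at hf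
    have h0 : i₀ ∉ cnt f := by simp [cnt, hf.2.1]
    have h1 : i₁ ∉ cnt f := by simp [cnt, hf.2.2]
    rw [mem_powersetCard]
    refine ⟨fun x hx => ?_, hf.1⟩
    simp only [mem_erase]
    exact ⟨fun h => h1 (h ▸ hx), fun h => h0 (h ▸ hx), mem_univ x⟩
  · intro t ht
    rw [mem_powersetCard] at ht
    have h0 : i₀ ∉ t := fun h => (mem_erase.mp (mem_erase.mp (ht.1 h)).2).1 rfl
    have h1 : i₁ ∉ t := fun h => (mem_erase.mp (ht.1 h)).1 rfl
    simp only [mem_filter, mem_univ, true_and]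
    exact ⟨by rw [cnt_ofSet, ht.2], by simp [h0], by simp [h1]⟩
  · intro f _; exact ofSet_cnt f
  · intro t _; exact cnt_ofSet t


lemma choose_id1 {M n : ℕ} (h1 : 1 ≤ n) (h2 : n ≤ M) :
    M * (M - 1).choose (n - 1) = n * M.choose n := by
  obtain ⟨m, rfl⟩ : ∃ m, M = m + 1 := ⟨M - 1, by omega⟩
  obtain ⟨k, rfl⟩ : ∃ k, n = k + 1 := ⟨n - 1, by omega⟩
  simp only [Nat.add_sub_cancel]
  calc (m + 1) * m.choose k = m.succ * m.choose k := rfl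
    _ = m.succ.choose k.succ * k.succ := Nat.add_one_mul_choose_eq m k
    _ = (k + 1) * (m + 1).choose (k + 1) := by
        rw [Nat.succ_eq_add_one, Nat.succ_eq_add_one, mul_comm]

lemma choose_id2 {M n : ℕ} (h2 : n ≤ M) :
    M * (M - 1).choose n = (M - n) * M.choose n := by
  rcases Nat.eq_zero_or_pos n with rfl | hn
  · simp
  obtain ⟨m, rfl⟩ : ∃ m, M = m + 1 := ⟨M - 1, by omega⟩
  obtain ⟨k, rfl⟩ : ∃ k, n = k + 1 := ⟨n - 1, by omega⟩
  simp only [Nat.add_sub_cancel]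
  have hkm : k ≤ m := by omega
  have h3 := Nat.choose_succ_right_eq m k
  have h4 : m + 1 - (k + 1) = m - k := by omega
  have h5 : m - k + (k + 1) = m + 1 := by omega
  rw [Nat.choose_succ_succ m k, h4]
  calc (m + 1) * m.choose (k + 1) = (m - k + (k + 1)) * m.choose (k + 1) := by rw [h5]
    _ = (m - k) * m.choose (k + 1) + m.choose (k + 1) * (k + 1) := by ring
    _ = (m - k) * m.choose (k + 1) + m.choose k * (m - k) := by rw [h3]
    _ = (m - k) * (m.choose k + m.choose (k + 1)) := by ring

/-- the set of boolean functions with exactly `n` `true`s. -/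
def bset (ι : Type*) [Fintype ι] [DecidableEq ι] (n : ℕ) : Finset (ι → Bool) :=
  univ.filter fun f => (cnt f).card = n

lemma card_bset (n : ℕ) : (bset ι n).card = (Fintype.card ι).choose n := card_bfun n

lemma bset_single_card (n : ℕ) (h1 : 1 ≤ n) (h2 : n + 1 ≤ Fintype.card ι) (i₀ : ι) (b : Bool) :
    ((bset ι n).filter fun f => f i₀ = b).card * Fintype.card ι
      = (bset ι n).card * (if b then n else Fintype.card ι - n) := by
  rw [bset, filter_filter, card_bfun]
  cases b
  · rw [if_neg (by simp)]
    rw [card_bfun_false n i₀, mul_comm, choose_id2 (by omega), mul_comm]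
  · rw [if_pos rfl]
    rw [card_bfun_true n h1 i₀, mul_comm, choose_id1 h1 (by omega), mul_comm]

lemma bset_pair_card (n : ℕ) (h1 : 2 ≤ n) (h2 : n + 2 ≤ Fintype.card ι)
    {i₀ i₁ : ι} (h01 : i₀ ≠ i₁) (b₀ b₁ : Bool) :
    ((bset ι n).filter fun f => f i₀ = b₀ ∧ f i₁ = b₁).card
        * (Fintype.card ι * (Fintype.card ι - 1))
      = (bset ι n).card * ((if b₀ then n else Fintype.card ι - n) *
          ((if b₁ then n else Fintype.card ι - n) - if b₀ = b₁ then 1 else 0)) := by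
  have e1 : Fintype.card ι * (Fintype.card ι - 1).choose (n - 1)
      = n * (Fintype.card ι).choose n := choose_id1 (by omega) (by omega)
  have e3 : (Fintype.card ι - 1) * (Fintype.card ι - 2).choose (n - 2)
      = (n - 1) * (Fintype.card ι - 1).choose (n - 1) := by
    have h := choose_id1 (M := Fintype.card ι - 1) (n := n - 1) (by omega) (by omega)
    have hh : Fintype.card ι - 1 - 1 = Fintype.card ι - 2 := by omega
    have hh2 : n - 1 - 1 = n - 2 := by omega
    rwa [hh, hh2] at h
  have e4 : (Fintype.card ι - 1) * (Fintype.card ι - 2).choose (n - 1)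
      = (Fintype.card ι - n) * (Fintype.card ι - 1).choose (n - 1) := by
    have h := choose_id2 (M := Fintype.card ι - 1) (n := n - 1) (by omega)
    have hh : Fintype.card ι - 1 - 1 = Fintype.card ι - 2 := by omega
    have hh2 : Fintype.card ι - 1 - (n - 1) = Fintype.card ι - n := by omega
    rwa [hh, hh2] at h
  have e5 : (Fintype.card ι - 1) * (Fintype.card ι - 2).choose n
      = (Fintype.card ι - 1 - n) * (Fintype.card ι - 1).choose n := by
    have hh : Fintype.card ι - 1 - 1 = Fintype.card ι - 2 := by omega
    have h := choose_id2 (M := Fintype.card ι - 1) (n := n) (by omega)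
    rwa [hh] at h
  have e2 : Fintype.card ι * (Fintype.card ι - 1).choose n
      = (Fintype.card ι - n) * (Fintype.card ι).choose n := choose_id2 (by omega)
  rw [bset, filter_filter, card_bfun]
  cases b₀ <;> cases b₁
  · rw [card_bfun_FF n h01, if_neg (by simp : ¬(false = true)), if_pos rfl]
    have hh : Fintype.card ι - n - 1 = Fintype.card ι - 1 - n := by omega
    rw [hh]
    calc (Fintype.card ι - 2).choose n * (Fintype.card ι * (Fintype.card ι - 1))
        = Fintype.card ι * ((Fintype.card ι - 1) * (Fintype.card ι - 2).choose n) := by ring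
      _ = Fintype.card ι * ((Fintype.card ι - 1 - n) * (Fintype.card ι - 1).choose n) := by
          rw [e5]
      _ = (Fintype.card ι - 1 - n) * (Fintype.card ι * (Fintype.card ι - 1).choose n) := by
          ring
      _ = (Fintype.card ι - 1 - n) * ((Fintype.card ι - n) * (Fintype.card ι).choose n) := by
          rw [e2]
      _ = (Fintype.card ι).choose n * ((Fintype.card ι - n) * (Fintype.card ι - 1 - n)) := by
          ring
  · rw [card_bfun_FT n (by omega) h01, if_neg (by simp : ¬(false = true)), if_pos rfl,
      if_neg (by simp : ¬(false = true)), Nat.sub_zero]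
    calc (Fintype.card ι - 2).choose (n - 1) * (Fintype.card ι * (Fintype.card ι - 1))
        = Fintype.card ι * ((Fintype.card ι - 1) * (Fintype.card ι - 2).choose (n - 1)) := by
          ring
      _ = Fintype.card ι * ((Fintype.card ι - n) * (Fintype.card ι - 1).choose (n - 1)) := by
          rw [e4]
      _ = (Fintype.card ι - n) * (Fintype.card ι * (Fintype.card ι - 1).choose (n - 1)) := by
          ring
      _ = (Fintype.card ι - n) * (n * (Fintype.card ι).choose n) := by rw [e1]
      _ = (Fintype.card ι).choose n * ((Fintype.card ι - n) * n) := by ring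
  · rw [card_bfun_TF n (by omega) h01, if_pos rfl, if_neg (by simp : ¬(false = true)),
      if_neg (by simp : ¬(true = false)), Nat.sub_zero]
    calc (Fintype.card ι - 2).choose (n - 1) * (Fintype.card ι * (Fintype.card ι - 1))
        = Fintype.card ι * ((Fintype.card ι - 1) * (Fintype.card ι - 2).choose (n - 1)) := by
          ring
      _ = Fintype.card ι * ((Fintype.card ι - n) * (Fintype.card ι - 1).choose (n - 1)) := by
          rw [e4]
      _ = (Fintype.card ι - n) * (Fintype.card ι * (Fintype.card ι - 1).choose (n - 1)) := by
          ring
      _ = (Fintype.card ι - n) * (n * (Fintype.card ι).choose n) := by rw [e1]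
      _ = (Fintype.card ι).choose n * (n * (Fintype.card ι - n)) := by ring
  · rw [card_bfun_TT n h1 h01, if_pos rfl]
    calc (Fintype.card ι - 2).choose (n - 2) * (Fintype.card ι * (Fintype.card ι - 1))
        = Fintype.card ι * ((Fintype.card ι - 1) * (Fintype.card ι - 2).choose (n - 2)) := by
          ring
      _ = Fintype.card ι * ((n - 1) * (Fintype.card ι - 1).choose (n - 1)) := by rw [e3]
      _ = (n - 1) * (Fintype.card ι * (Fintype.card ι - 1).choose (n - 1)) := by ring
      _ = (n - 1) * (n * (Fintype.card ι).choose n) := by rw [e1]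
      _ = (Fintype.card ι).choose n * (n * (n - 1)) := by ring

end Counting

namespace Design

variable (d : Design)

lemma two_le_W : 2 ≤ d.W := by
  have h : d.W = d.W0 + d.W1 := rfl
  have := d.hW0; have := d.hW1; omega

lemma two_le_M (w : Fin d.W) : 2 ≤ d.M w := by
  have h : d.M w = d.M0 w + d.M1 w := rfl
  have := d.hM0 w; have := d.hM1 w; omega

lemma W_pos : 0 < d.W := by
  have h : d.W = d.W0 + d.W1 := rfl
  have := d.hW0; have := d.hW1; omega

lemma Wa_pos (a : Bool) : 0 < d.Wa a := by
  have := d.hW0; have := d.hW1; cases a <;> simp [Design.Wa] <;> omega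

lemma M_pos (w : Fin d.W) : 0 < d.M w := by
  have h : d.M w = d.M0 w + d.M1 w := rfl
  have := d.hM0 w; have := d.hM1 w; omega

lemma Mb_pos (w : Fin d.W) (b : Bool) : 0 < d.Mb w b := by
  have := d.hM0 w; have := d.hM1 w; cases b <;> simp [Design.Mb] <;> omega

lemma N_pos : 0 < d.N := by
  rw [Design.N]
  apply Finset.sum_pos (fun w _ => d.M_pos w)
  exact univ_nonempty_iff.mpr (Fin.pos_iff_nonempty.mp d.W_pos)

/-- the stage-I assignment set. -/
def Aset : Finset (Fin d.W → Bool) := bset (Fin d.W) d.W1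

/-- the stage-II assignment set for whole-plot `w`. -/
def Bset (w : Fin d.W) : Finset (Fin (d.M w) → Bool) := bset (Fin (d.M w)) (d.M1 w)

lemma Ω_eq : d.Ω = d.Aset ×ˢ Fintype.piFinset (fun w => d.Bset w) := by
  ext ⟨α, β⟩
  have hA : ∀ {κ : Type} [Fintype κ] [DecidableEq κ] (n : ℕ) (f : κ → Bool),
      f ∈ bset κ n ↔ (cnt f).card = n :=
    fun n f => Finset.mem_filter.trans (and_iff_right (Finset.mem_univ _))
  simp [Design.Ω, Design.Aset, Design.Bset, hA, cnt, Fintype.mem_piFinset,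
    Finset.mem_product]

lemma cardA_pos : 0 < d.Aset.card := by
  rw [Design.Aset, card_bset, Fintype.card_fin]
  exact Nat.choose_pos (by have h : d.W = d.W0 + d.W1 := rfl; have := d.hW0; omega)

lemma cardB_pos (w : Fin d.W) : 0 < (d.Bset w).card := by
  rw [Design.Bset, card_bset, Fintype.card_fin]
  exact Nat.choose_pos (by have h : d.M w = d.M0 w + d.M1 w := rfl; have := d.hM0 w; omega)

/-- stage-I expectation. -/
def AE (g : (Fin d.W → Bool) → ℝ) : ℝ := (∑ α ∈ d.Aset, g α) / (d.Aset.card : ℝ)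

/-- stage-II expectation in whole-plot `w`. -/
def BE (w : Fin d.W) (h : (Fin (d.M w) → Bool) → ℝ) : ℝ :=
  (∑ β ∈ d.Bset w, h β) / ((d.Bset w).card : ℝ)

lemma BE_one (w : Fin d.W) : d.BE w (fun _ => 1) = 1 := by
  rw [Design.BE, Finset.sum_const, nsmul_eq_mul, mul_one, div_self]
  exact Nat.cast_ne_zero.mpr (d.cardB_pos w).ne'

lemma BE_const_mul (w : Fin d.W) (c : ℝ) (h : (Fin (d.M w) → Bool) → ℝ) :
    d.BE w (fun β => c * h β) = c * d.BE w h := by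
  rw [Design.BE, Design.BE, ← Finset.mul_sum, mul_div_assoc]

lemma expect_factor (g : (Fin d.W → Bool) → ℝ)
    (h : ∀ w : Fin d.W, (Fin (d.M w) → Bool) → ℝ) :
    d.expect (fun ω => g ω.1 * ∏ w, h w (ω.2 w)) = d.AE g * ∏ w, d.BE w (h w) := by
  rw [Design.expect, d.Ω_eq, Finset.sum_product, Finset.card_product,
    Fintype.card_piFinset]
  have e1 : ∀ α : Fin d.W → Bool,
      (∑ x ∈ Fintype.piFinset (fun w => d.Bset w), g α * ∏ w, h w (x w))
        = g α * ∏ w, (∑ β ∈ d.Bset w, h w β) := by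
    intro α
    rw [← Finset.mul_sum, Finset.prod_univ_sum]
  simp only [e1]
  rw [← Finset.sum_mul]
  push_cast
  rw [mul_div_mul_comm]
  congr 1
  simp only [Design.BE]
  exact (Finset.prod_div_distrib _ _).symm

lemma expect_congr {f g : d.Assign → ℝ} (h : ∀ ω ∈ d.Ω, f ω = g ω) :
    d.expect f = d.expect g := by
  rw [Design.expect, Design.expect, Finset.sum_congr rfl h]

lemma expect_sum {σ : Type*} (s : Finset σ) (F : σ → d.Assign → ℝ) :
    d.expect (fun ω => ∑ w ∈ s, F w ω) = ∑ w ∈ s, d.expect (F w) := by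
  rw [Design.expect, Finset.sum_comm, Finset.sum_div]
  simp only [Design.expect]

lemma expect_const_mul (c : ℝ) (f : d.Assign → ℝ) :
    d.expect (fun ω => c * f ω) = c * d.expect f := by
  rw [Design.expect, Design.expect, ← Finset.mul_sum, mul_div_assoc]

lemma expect_one (g : (Fin d.W → Bool) → ℝ) (w₀ : Fin d.W)
    (h : (Fin (d.M w₀) → Bool) → ℝ) :
    d.expect (fun ω => g ω.1 * h (ω.2 w₀)) = d.AE g * d.BE w₀ h := by
  have key := d.expect_factor g
    (Function.update (fun w => (fun _ => (1:ℝ) : (Fin (d.M w) → Bool) → ℝ)) w₀ h)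
  have e1 : ∀ ω : d.Assign,
      (∏ w, Function.update (fun w => (fun _ => (1:ℝ) : (Fin (d.M w) → Bool) → ℝ)) w₀ h w
        (ω.2 w)) = h (ω.2 w₀) := by
    intro ω
    rw [Finset.prod_eq_single w₀]
    · rw [Function.update_self]
    · intro w _ hw; rw [Function.update_of_ne hw]
    · simp
  have e2 : (∏ w, d.BE w (Function.update
      (fun w => (fun _ => (1:ℝ) : (Fin (d.M w) → Bool) → ℝ)) w₀ h w)) = d.BE w₀ h := by
    rw [Finset.prod_eq_single w₀]
    · rw [Function.update_self]
    · intro w _ hw; rw [Function.update_of_ne hw]; exact d.BE_one w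
    · simp
  simp only [e1, e2] at key
  exact key

lemma expect_two (g : (Fin d.W → Bool) → ℝ) {w₁ w₂ : Fin d.W} (h12 : w₁ ≠ w₂)
    (h₁ : (Fin (d.M w₁) → Bool) → ℝ) (h₂ : (Fin (d.M w₂) → Bool) → ℝ) :
    d.expect (fun ω => g ω.1 * (h₁ (ω.2 w₁) * h₂ (ω.2 w₂)))
      = d.AE g * (d.BE w₁ h₁ * d.BE w₂ h₂) := by
  set F := Function.update (Function.update
    (fun w => (fun _ => (1:ℝ) : (Fin (d.M w) → Bool) → ℝ)) w₁ h₁) w₂ h₂ with hF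
  have key := d.expect_factor g F
  have hFw1 : F w₁ = h₁ := by
    rw [hF, Function.update_of_ne h12, Function.update_self]
  have hFw2 : F w₂ = h₂ := by rw [hF, Function.update_self]
  have hFo : ∀ w, w ≠ w₁ → w ≠ w₂ → F w = fun _ => (1:ℝ) := by
    intro w hw1 hw2
    rw [hF, Function.update_of_ne hw2, Function.update_of_ne hw1]
  have e1 : ∀ ω : d.Assign, (∏ w, F w (ω.2 w)) = h₁ (ω.2 w₁) * h₂ (ω.2 w₂) := by
    intro ω
    rw [← Finset.mul_prod_erase univ _ (mem_univ w₂), hFw2]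
    rw [Finset.prod_eq_single w₁]
    · rw [hFw1, mul_comm]
    · intro w hw hw1
      rw [hFo w hw1 (Finset.mem_erase.mp hw).1]
    · intro hw; exact absurd (Finset.mem_erase.mpr ⟨h12, mem_univ w₁⟩) hw
  have e2 : (∏ w, d.BE w (F w)) = d.BE w₁ h₁ * d.BE w₂ h₂ := by
    rw [← Finset.mul_prod_erase univ _ (mem_univ w₂), hFw2]
    rw [Finset.prod_eq_single w₁]
    · rw [hFw1, mul_comm]
    · intro w hw hw1
      rw [hFo w hw1 (Finset.mem_erase.mp hw).1]; exact d.BE_one w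
    · intro hw; exact absurd (Finset.mem_erase.mpr ⟨h12, mem_univ w₁⟩) hw
  simp only [e1, e2] at key
  exact key

lemma Wa_eq (a : Bool) : (if a then d.W1 else d.W - d.W1) = d.Wa a := by
  have h : d.W = d.W0 + d.W1 := rfl
  cases a <;> simp [Design.Wa] <;> omega

lemma AE_ind (w₀ : Fin d.W) (a : Bool) :
    d.AE (fun α => if α w₀ = a then (1:ℝ) else 0) = d.p a := by
  have hnat := bset_single_card (ι := Fin d.W) d.W1
    (by have := d.hW1; omega)
    (by rw [Fintype.card_fin]
        have h : d.W = d.W0 + d.W1 := rfl; have := d.hW0; omega) w₀ a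
  rw [Fintype.card_fin, d.Wa_eq a] at hnat
  rw [Design.AE, Finset.sum_boole, Design.p]
  have hA : ((d.Aset.card : ℕ) : ℝ) ≠ 0 := Nat.cast_ne_zero.mpr d.cardA_pos.ne'
  have hW : ((d.W : ℕ) : ℝ) ≠ 0 := Nat.cast_ne_zero.mpr d.W_pos.ne'
  have hcast : ((d.Aset.filter fun α => α w₀ = a).card : ℝ) * (d.W : ℝ)
      = (d.Aset.card : ℝ) * (d.Wa a : ℝ) := by
    rw [Design.Aset]
    exact_mod_cast congrArg (Nat.cast (R := ℝ)) hnat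
  rw [div_eq_div_iff hA hW]
  linear_combination hcast

lemma BE_ind (w : Fin d.W) (s₀ : Fin (d.M w)) (b : Bool) :
    d.BE w (fun β => if β s₀ = b then (1:ℝ) else 0) = d.q w b := by
  have hnat := bset_single_card (ι := Fin (d.M w)) (d.M1 w)
    (by have := d.hM1 w; omega)
    (by rw [Fintype.card_fin]
        have h : d.M w = d.M0 w + d.M1 w := rfl; have := d.hM0 w; omega) s₀ b
  rw [Fintype.card_fin] at hnat
  have hMb : (if b then d.M1 w else d.M w - d.M1 w) = d.Mb w b := by
    have h : d.M w = d.M0 w + d.M1 w := rfl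
    cases b <;> simp [Design.Mb] <;> omega
  rw [hMb] at hnat
  rw [Design.BE, Finset.sum_boole, Design.q]
  have hB : (((d.Bset w).card : ℕ) : ℝ) ≠ 0 := Nat.cast_ne_zero.mpr (d.cardB_pos w).ne'
  have hM : ((d.M w : ℕ) : ℝ) ≠ 0 := Nat.cast_ne_zero.mpr (d.M_pos w).ne'
  have hcast : (((d.Bset w).filter fun β => β s₀ = b).card : ℝ) * (d.M w : ℝ)
      = ((d.Bset w).card : ℝ) * (d.Mb w b : ℝ) := by
    rw [Design.Bset]
    exact_mod_cast congrArg (Nat.cast (R := ℝ)) hnat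
  rw [div_eq_div_iff hB hM]
  linear_combination hcast

lemma AE_ind2 {w₁ w₂ : Fin d.W} (h12 : w₁ ≠ w₂) (a a' : Bool) :
    d.AE (fun α => (if α w₁ = a then (1:ℝ) else 0) * (if α w₂ = a' then 1 else 0))
      = ((d.Wa a : ℝ) * ((d.Wa a' : ℝ) - if a = a' then 1 else 0))
        / ((d.W : ℝ) * ((d.W : ℝ) - 1)) := by
  have hnat := bset_pair_card (ι := Fin d.W) d.W1 d.hW1
    (by rw [Fintype.card_fin]
        have h : d.W = d.W0 + d.W1 := rfl; have := d.hW0; omega) h12 a a'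
  rw [Fintype.card_fin, d.Wa_eq a, d.Wa_eq a'] at hnat
  have e0 : ∀ α : Fin d.W → Bool,
      (if α w₁ = a then (1:ℝ) else 0) * (if α w₂ = a' then 1 else 0)
        = if (α w₁ = a ∧ α w₂ = a') then 1 else 0 := by
    intro α
    by_cases h1 : α w₁ = a <;> by_cases h2 : α w₂ = a' <;> simp [h1, h2]
  simp only [e0]
  rw [Design.AE, Finset.sum_boole]
  have hA : ((d.Aset.card : ℕ) : ℝ) ≠ 0 := Nat.cast_ne_zero.mpr d.cardA_pos.ne'
  have hW : ((d.W : ℕ) : ℝ) ≠ 0 := Nat.cast_ne_zero.mpr d.W_pos.ne'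
  have hW1 : (d.W : ℝ) - 1 ≠ 0 := by
    have h2W : (2 : ℝ) ≤ (d.W : ℝ) := by exact_mod_cast d.two_le_W
    linarith
  have hδ : ((d.Wa a' - if a = a' then 1 else 0 : ℕ) : ℝ)
      = (d.Wa a' : ℝ) - if a = a' then 1 else 0 := by
    have h1 : 1 ≤ d.Wa a' := d.Wa_pos a'
    by_cases haa : a = a'
    · simp [haa, Nat.cast_sub h1]
    · simp [haa]
  have hWW : ((d.W * (d.W - 1) : ℕ) : ℝ) = (d.W : ℝ) * ((d.W : ℝ) - 1) := by
    have h1 : 1 ≤ d.W := d.W_pos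
    push_cast [Nat.cast_sub h1]; ring
  have hcast : ((d.Aset.filter fun α => α w₁ = a ∧ α w₂ = a').card : ℝ)
        * ((d.W : ℝ) * ((d.W : ℝ) - 1))
      = (d.Aset.card : ℝ) * ((d.Wa a : ℝ) * ((d.Wa a' : ℝ) - if a = a' then 1 else 0)) := by
    rw [← hWW, ← hδ, Design.Aset]
    exact_mod_cast congrArg (Nat.cast (R := ℝ)) hnat
  rw [div_eq_div_iff hA (mul_ne_zero hW hW1)]
  linear_combination hcast


lemma Wr_ne : (d.W : ℝ) ≠ 0 := Nat.cast_ne_zero.mpr d.W_pos.ne'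
lemma Wr1_ne : (d.W : ℝ) - 1 ≠ 0 := by
  have h2W : (2 : ℝ) ≤ (d.W : ℝ) := by exact_mod_cast d.two_le_W
  linarith
lemma War_ne (a : Bool) : (d.Wa a : ℝ) ≠ 0 := Nat.cast_ne_zero.mpr (d.Wa_pos a).ne'
lemma War1_ne (a : Bool) : (d.Wa a : ℝ) - 1 ≠ 0 := by
  have h2 : 2 ≤ d.Wa a := by
    have := d.hW0; have := d.hW1; cases a <;> simp [Design.Wa] <;> omega
  have h2' : (2 : ℝ) ≤ (d.Wa a : ℝ) := by exact_mod_cast h2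
  linarith
lemma Mr_ne (w : Fin d.W) : (d.M w : ℝ) ≠ 0 := Nat.cast_ne_zero.mpr (d.M_pos w).ne'
lemma Mbr_ne (w : Fin d.W) (b : Bool) : (d.Mb w b : ℝ) ≠ 0 :=
  Nat.cast_ne_zero.mpr (d.Mb_pos w b).ne'
lemma Nr_ne : (d.N : ℝ) ≠ 0 := Nat.cast_ne_zero.mpr d.N_pos.ne'

lemma Z_eq_iff (ω : d.Assign) (w : Fin d.W) (s : Fin (d.M w)) (z : T) :
    d.Z ω w s = z ↔ (ω.1 w = z.1 ∧ ω.2 w s = z.2) := by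
  rw [Design.Z, Prod.ext_iff]

/-- Plot-level sample mean of potential outcomes under `z`, as a function of the
stage-II assignment of the plot. -/
def G (z : T) (w : Fin d.W) (β : Fin (d.M w) → Bool) : ℝ :=
  (d.Mb w z.2 : ℝ)⁻¹ * ∑ s, if β s = z.2 then d.Y w s z else 0

lemma Yw_eq (ω : d.Assign) (w : Fin d.W) (z : T) :
    d.Yw ω w z = (if ω.1 w = z.1 then (1:ℝ) else 0) * d.G z w (ω.2 w) := by
  rw [Design.Yw, Design.G]
  by_cases h : ω.1 w = z.1
  · rw [if_pos h, one_mul]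
    congr 1
    apply Finset.sum_congr rfl
    intro s _
    by_cases hb : ω.2 w s = z.2
    · have hz : d.Z ω w s = z := (d.Z_eq_iff ω w s z).mpr ⟨h, hb⟩
      rw [if_pos hz, if_pos hb, Design.Yobs, hz]
    · rw [if_neg (fun hz => hb ((d.Z_eq_iff ω w s z).mp hz).2), if_neg hb]
  · rw [if_neg h, zero_mul]
    have hz : ∀ s, (if d.Z ω w s = z then d.Yobs ω w s else 0) = 0 := fun s =>
      if_neg (fun hz => h ((d.Z_eq_iff ω w s z).mp hz).1)
    rw [Finset.sum_congr rfl (fun s _ => hz s), Finset.sum_const, smul_zero, mul_zero]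

lemma prob_const (w : Fin d.W) (z : T) :
    (d.N : ℝ)⁻¹ * (d.prob w z)⁻¹ = (d.Wa z.1 : ℝ)⁻¹ * d.alpha w * (d.Mb w z.2 : ℝ)⁻¹ := by
  rw [Design.prob, Design.p, Design.q, Design.alpha]
  field_simp

lemma Yht_eq (ω : d.Assign) (z : T) :
    d.Yht ω z = ∑ w, (if ω.1 w = z.1 then (1:ℝ) else 0) *
      ((d.Wa z.1 : ℝ)⁻¹ * d.alpha w * d.G z w (ω.2 w)) := by
  rw [Design.Yht, Finset.mul_sum]
  apply Finset.sum_congr rfl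
  intro w _
  by_cases h : ω.1 w = z.1
  · rw [if_pos h, one_mul]
    have hsum : (∑ s, if d.Z ω w s = z then (d.prob w z)⁻¹ * d.Yobs ω w s else 0)
        = (d.prob w z)⁻¹ * ∑ s, (if ω.2 w s = z.2 then d.Y w s z else 0) := by
      rw [Finset.mul_sum]
      apply Finset.sum_congr rfl
      intro s _
      by_cases hb : ω.2 w s = z.2
      · have hz : d.Z ω w s = z := (d.Z_eq_iff ω w s z).mpr ⟨h, hb⟩
        rw [if_pos hz, if_pos hb, Design.Yobs, hz]
      · rw [if_neg (fun hz => hb ((d.Z_eq_iff ω w s z).mp hz).2), if_neg hb, mul_zero]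
    rw [hsum, Design.G, ← mul_assoc, d.prob_const w z]
    ring
  · rw [if_neg h, zero_mul]
    have hz : ∀ s, (if d.Z ω w s = z then (d.prob w z)⁻¹ * d.Yobs ω w s else 0) = 0 := fun s =>
      if_neg (fun hz => h ((d.Z_eq_iff ω w s z).mp hz).1)
    rw [Finset.sum_congr rfl (fun s _ => hz s), Finset.sum_const, smul_zero, mul_zero]

lemma BE_sum {σ : Type*} (w : Fin d.W) (t : Finset σ)
    (h : σ → (Fin (d.M w) → Bool) → ℝ) :
    d.BE w (fun β => ∑ s ∈ t, h s β) = ∑ s ∈ t, d.BE w (h s) := by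
  rw [Design.BE, Finset.sum_comm, Finset.sum_div]
  simp only [Design.BE]

lemma BE_G (w : Fin d.W) (z : T) : d.BE w (d.G z w) = d.Ybarw w z := by
  have h1 : d.G z w = fun β => (d.Mb w z.2 : ℝ)⁻¹ *
      ∑ s, (if β s = z.2 then d.Y w s z else 0) := rfl
  rw [h1, d.BE_const_mul w _ (fun β => ∑ s, (if β s = z.2 then d.Y w s z else 0)),
    d.BE_sum w univ (fun s β => if β s = z.2 then d.Y w s z else 0)]
  have h2 : ∀ s : Fin (d.M w), d.BE w (fun β => if β s = z.2 then d.Y w s z else 0)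
      = d.Y w s z * d.q w z.2 := by
    intro s
    have h3 : (fun β : Fin (d.M w) → Bool => if β s = z.2 then d.Y w s z else 0)
        = fun β => d.Y w s z * (if β s = z.2 then (1:ℝ) else 0) := by
      funext β; by_cases hb : β s = z.2 <;> simp [hb]
    rw [h3, d.BE_const_mul w _ _, d.BE_ind w s z.2]
  rw [Finset.sum_congr rfl (fun s _ => h2 s), ← Finset.sum_mul, Design.Ybarw, Design.q]
  have hMb := d.Mbr_ne w z.2
  have hM := d.Mr_ne w
  push_cast at hMb hM ⊢
  field_simp

lemma Ybar_eq (z : T) : d.Ybar z = (d.W : ℝ)⁻¹ * ∑ w, d.U w z := by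
  rw [Design.Ybar, Finset.mul_sum, Finset.mul_sum]
  apply Finset.sum_congr rfl
  intro w _
  rw [Design.U, Design.alpha, Design.Ybarw]
  have hM := d.Mr_ne w
  have hN := d.Nr_ne
  have hW := d.Wr_ne
  push_cast at hM hN hW ⊢
  field_simp

lemma expect_Yht (z : T) : d.expect (fun ω => d.Yht ω z) = d.Ybar z := by
  have h1 : (fun ω : d.Assign => d.Yht ω z) = fun ω => ∑ w,
      (if ω.1 w = z.1 then (1:ℝ) else 0) *
        ((d.Wa z.1 : ℝ)⁻¹ * d.alpha w * d.G z w (ω.2 w)) :=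
    funext fun ω => d.Yht_eq ω z
  rw [h1, d.expect_sum]
  have h2 : ∀ w : Fin d.W, d.expect (fun ω =>
        (if ω.1 w = z.1 then (1:ℝ) else 0) *
          ((d.Wa z.1 : ℝ)⁻¹ * d.alpha w * d.G z w (ω.2 w)))
      = d.p z.1 * ((d.Wa z.1 : ℝ)⁻¹ * d.alpha w * d.Ybarw w z) := by
    intro w
    have key := d.expect_one (fun α => if α w = z.1 then (1:ℝ) else 0) w
      (fun β => (d.Wa z.1 : ℝ)⁻¹ * d.alpha w * d.G z w β)
    rw [key, d.AE_ind w z.1]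
    congr 1
    have h3 : (fun β : Fin (d.M w) → Bool => (d.Wa z.1 : ℝ)⁻¹ * d.alpha w * d.G z w β)
        = fun β => ((d.Wa z.1 : ℝ)⁻¹ * d.alpha w) * d.G z w β := rfl
    rw [h3, d.BE_const_mul w _ (d.G z w), d.BE_G w z]
  rw [Finset.sum_congr rfl (fun w _ => h2 w), d.Ybar_eq z, Finset.mul_sum]
  apply Finset.sum_congr rfl
  intro w _
  rw [Design.p, Design.U]
  have hW := d.Wr_ne
  have hWa := d.War_ne z.1
  push_cast at hW hWa ⊢
  field_simp


/-- Within-plot second moment of the plot-level sample means (left symbolic). -/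
def ee (w : Fin d.W) (z z' : T) : ℝ := d.BE w (fun β => d.G z w β * d.G z' w β)

lemma AE_zero : d.AE (fun _ => 0) = 0 := by simp [Design.AE]

lemma expect_sub (f g : d.Assign → ℝ) :
    d.expect (fun ω => f ω - g ω) = d.expect f - d.expect g := by
  simp [Design.expect, Finset.sum_sub_distrib, sub_div]

lemma AE_ind_same (w : Fin d.W) (a a' : Bool) :
    d.AE (fun α => (if α w = a then (1:ℝ) else 0) * (if α w = a' then 1 else 0))
      = if a = a' then d.p a else 0 := by
  by_cases haa : a = a'
  · subst haa
    have h1 : (fun α : Fin d.W → Bool =>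
        (if α w = a then (1:ℝ) else 0) * (if α w = a then 1 else 0))
        = fun α => if α w = a then (1:ℝ) else 0 := by
      funext α; by_cases h : α w = a <;> simp [h]
    rw [h1, d.AE_ind w a, if_pos rfl]
  · have h1 : (fun α : Fin d.W → Bool =>
        (if α w = a then (1:ℝ) else 0) * (if α w = a' then 1 else 0))
        = fun _ => (0:ℝ) := by
      funext α
      by_cases h : α w = a
      · rw [if_neg (fun hc => haa (h.symm.trans hc)), mul_zero]
      · rw [if_neg h, zero_mul]
    rw [h1, d.AE_zero, if_neg haa]

lemma sum_mul_erase (f g : Fin d.W → ℝ) :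
    (∑ w, ∑ w' ∈ univ.erase w, f w * g w')
      = (∑ w, f w) * (∑ w, g w) - ∑ w, f w * g w := by
  have h1 : ∀ w : Fin d.W, (∑ w' ∈ univ.erase w, f w * g w')
      = f w * (∑ w', g w') - f w * g w := by
    intro w
    rw [← Finset.mul_sum, Finset.sum_erase_eq_sub (mem_univ w), mul_sub]
  rw [Finset.sum_congr rfl (fun w _ => h1 w), Finset.sum_sub_distrib, ← Finset.sum_mul]

lemma count_A {ω : d.Assign} (hω : ω ∈ d.Ω) (a : Bool) :
    (∑ w, if ω.1 w = a then (1:ℝ) else 0) = (d.Wa a : ℝ) := by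
  rw [Finset.sum_boole]
  rw [Design.Ω, Finset.mem_filter] at hω
  obtain ⟨-, h1, -⟩ := hω
  cases a
  · have htot := Finset.card_filter_add_card_filter_not
      (s := (univ : Finset (Fin d.W))) (p := fun w => ω.1 w = true)
    have hconv : (univ.filter fun w => ω.1 w = false)
        = (univ.filter fun w => ¬ (ω.1 w = true)) := by
      apply Finset.filter_congr; intro w _; simp
    have hcardU : (univ : Finset (Fin d.W)).card = d.W0 + d.W1 := by
      rw [Finset.card_univ, Fintype.card_fin]
    have hc : (univ.filter fun w => ω.1 w = false).card = d.W0 := by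
      rw [hconv]; omega
    rw [hc]
    simp [Design.Wa]
  · rw [h1]
    simp [Design.Wa]

lemma expect_Yht_mul (z z' : T) :
    d.expect (fun ω => d.Yht ω z * d.Yht ω z')
      = (if z.1 = z'.1 then d.p z.1 else 0) * ((d.Wa z.1 : ℝ)⁻¹ * (d.Wa z'.1 : ℝ)⁻¹)
          * (∑ w, d.alpha w ^ 2 * d.ee w z z')
        + ((d.Wa z.1 : ℝ) * ((d.Wa z'.1 : ℝ) - if z.1 = z'.1 then 1 else 0)
            / ((d.W : ℝ) * ((d.W : ℝ) - 1))) * ((d.Wa z.1 : ℝ)⁻¹ * (d.Wa z'.1 : ℝ)⁻¹)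
          * ((∑ w, d.U w z) * (∑ w, d.U w z') - ∑ w, d.U w z * d.U w z') := by
  have h1 : (fun ω : d.Assign => d.Yht ω z * d.Yht ω z') = fun ω => ∑ w, ∑ w',
      ((if ω.1 w = z.1 then (1:ℝ) else 0) *
          ((d.Wa z.1 : ℝ)⁻¹ * d.alpha w * d.G z w (ω.2 w)))
        * ((if ω.1 w' = z'.1 then (1:ℝ) else 0) *
          ((d.Wa z'.1 : ℝ)⁻¹ * d.alpha w' * d.G z' w' (ω.2 w'))) := by
    funext ω
    rw [d.Yht_eq ω z, d.Yht_eq ω z', Finset.sum_mul_sum]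
  rw [h1, d.expect_sum]
  have h2 : ∀ w : Fin d.W, d.expect (fun ω => ∑ w',
      ((if ω.1 w = z.1 then (1:ℝ) else 0) *
          ((d.Wa z.1 : ℝ)⁻¹ * d.alpha w * d.G z w (ω.2 w)))
        * ((if ω.1 w' = z'.1 then (1:ℝ) else 0) *
          ((d.Wa z'.1 : ℝ)⁻¹ * d.alpha w' * d.G z' w' (ω.2 w'))))
      = ∑ w', d.expect (fun ω =>
      ((if ω.1 w = z.1 then (1:ℝ) else 0) *
          ((d.Wa z.1 : ℝ)⁻¹ * d.alpha w * d.G z w (ω.2 w)))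
        * ((if ω.1 w' = z'.1 then (1:ℝ) else 0) *
          ((d.Wa z'.1 : ℝ)⁻¹ * d.alpha w' * d.G z' w' (ω.2 w')))) := fun w =>
    d.expect_sum univ _
  rw [Finset.sum_congr rfl (fun w _ => h2 w)]
  have hdiag : ∀ w : Fin d.W, d.expect (fun ω =>
      ((if ω.1 w = z.1 then (1:ℝ) else 0) *
          ((d.Wa z.1 : ℝ)⁻¹ * d.alpha w * d.G z w (ω.2 w)))
        * ((if ω.1 w = z'.1 then (1:ℝ) else 0) *
          ((d.Wa z'.1 : ℝ)⁻¹ * d.alpha w * d.G z' w (ω.2 w))))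
      = (if z.1 = z'.1 then d.p z.1 else 0) * ((d.Wa z.1 : ℝ)⁻¹ * (d.Wa z'.1 : ℝ)⁻¹)
          * (d.alpha w ^ 2 * d.ee w z z') := by
    intro w
    have hfun : (fun ω : d.Assign =>
        ((if ω.1 w = z.1 then (1:ℝ) else 0) *
            ((d.Wa z.1 : ℝ)⁻¹ * d.alpha w * d.G z w (ω.2 w)))
          * ((if ω.1 w = z'.1 then (1:ℝ) else 0) *
            ((d.Wa z'.1 : ℝ)⁻¹ * d.alpha w * d.G z' w (ω.2 w))))
        = fun ω => ((if ω.1 w = z.1 then (1:ℝ) else 0) * (if ω.1 w = z'.1 then 1 else 0))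
            * (((d.Wa z.1 : ℝ)⁻¹ * (d.Wa z'.1 : ℝ)⁻¹ * d.alpha w ^ 2)
              * (d.G z w (ω.2 w) * d.G z' w (ω.2 w))) := by
      funext ω; ring
    rw [hfun, d.expect_one (fun α => (if α w = z.1 then (1:ℝ) else 0) *
        (if α w = z'.1 then 1 else 0)) w
      (fun β => ((d.Wa z.1 : ℝ)⁻¹ * (d.Wa z'.1 : ℝ)⁻¹ * d.alpha w ^ 2)
        * (d.G z w β * d.G z' w β)),
      d.AE_ind_same w z.1 z'.1,
      d.BE_const_mul w _ (fun β => d.G z w β * d.G z' w β)]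
    rw [Design.ee]
    ring
  have hoff : ∀ w w' : Fin d.W, w' ≠ w → d.expect (fun ω =>
      ((if ω.1 w = z.1 then (1:ℝ) else 0) *
          ((d.Wa z.1 : ℝ)⁻¹ * d.alpha w * d.G z w (ω.2 w)))
        * ((if ω.1 w' = z'.1 then (1:ℝ) else 0) *
          ((d.Wa z'.1 : ℝ)⁻¹ * d.alpha w' * d.G z' w' (ω.2 w'))))
      = ((d.Wa z.1 : ℝ) * ((d.Wa z'.1 : ℝ) - if z.1 = z'.1 then 1 else 0)
            / ((d.W : ℝ) * ((d.W : ℝ) - 1))) * ((d.Wa z.1 : ℝ)⁻¹ * (d.Wa z'.1 : ℝ)⁻¹)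
          * (d.U w z * d.U w' z') := by
    intro w w' hww
    have hfun : (fun ω : d.Assign =>
        ((if ω.1 w = z.1 then (1:ℝ) else 0) *
            ((d.Wa z.1 : ℝ)⁻¹ * d.alpha w * d.G z w (ω.2 w)))
          * ((if ω.1 w' = z'.1 then (1:ℝ) else 0) *
            ((d.Wa z'.1 : ℝ)⁻¹ * d.alpha w' * d.G z' w' (ω.2 w'))))
        = fun ω => ((if ω.1 w = z.1 then (1:ℝ) else 0) * (if ω.1 w' = z'.1 then 1 else 0))
            * ((((d.Wa z.1 : ℝ)⁻¹ * d.alpha w) * d.G z w (ω.2 w))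
              * (((d.Wa z'.1 : ℝ)⁻¹ * d.alpha w') * d.G z' w' (ω.2 w'))) := by
      funext ω; ring
    rw [hfun, d.expect_two (fun α => (if α w = z.1 then (1:ℝ) else 0) *
        (if α w' = z'.1 then 1 else 0)) (Ne.symm hww)
      (fun β => ((d.Wa z.1 : ℝ)⁻¹ * d.alpha w) * d.G z w β)
      (fun β => ((d.Wa z'.1 : ℝ)⁻¹ * d.alpha w') * d.G z' w' β),
      d.AE_ind2 (Ne.symm hww) z.1 z'.1,
      d.BE_const_mul w _ (d.G z w), d.BE_const_mul w' _ (d.G z' w'),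
      d.BE_G w z, d.BE_G w' z']
    rw [Design.U, Design.U]
    ring
  have h3 : ∀ w : Fin d.W, (∑ w', d.expect (fun ω =>
      ((if ω.1 w = z.1 then (1:ℝ) else 0) *
          ((d.Wa z.1 : ℝ)⁻¹ * d.alpha w * d.G z w (ω.2 w)))
        * ((if ω.1 w' = z'.1 then (1:ℝ) else 0) *
          ((d.Wa z'.1 : ℝ)⁻¹ * d.alpha w' * d.G z' w' (ω.2 w')))))
      = (if z.1 = z'.1 then d.p z.1 else 0) * ((d.Wa z.1 : ℝ)⁻¹ * (d.Wa z'.1 : ℝ)⁻¹)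
          * (d.alpha w ^ 2 * d.ee w z z')
        + ∑ w' ∈ univ.erase w,
          ((d.Wa z.1 : ℝ) * ((d.Wa z'.1 : ℝ) - if z.1 = z'.1 then 1 else 0)
              / ((d.W : ℝ) * ((d.W : ℝ) - 1))) * ((d.Wa z.1 : ℝ)⁻¹ * (d.Wa z'.1 : ℝ)⁻¹)
            * (d.U w z * d.U w' z') := by
    intro w
    rw [← Finset.add_sum_erase univ _ (mem_univ w), hdiag w]
    congr 1
    apply Finset.sum_congr rfl
    intro w' hw'
    exact hoff w w' (Finset.mem_erase.mp hw').1
  rw [Finset.sum_congr rfl (fun w _ => h3 w), Finset.sum_add_distrib, ← Finset.mul_sum]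
  congr 1
  have h4 : ∀ w : Fin d.W, (∑ w' ∈ univ.erase w,
      ((d.Wa z.1 : ℝ) * ((d.Wa z'.1 : ℝ) - if z.1 = z'.1 then 1 else 0)
          / ((d.W : ℝ) * ((d.W : ℝ) - 1))) * ((d.Wa z.1 : ℝ)⁻¹ * (d.Wa z'.1 : ℝ)⁻¹)
        * (d.U w z * d.U w' z'))
      = ((d.Wa z.1 : ℝ) * ((d.Wa z'.1 : ℝ) - if z.1 = z'.1 then 1 else 0)
          / ((d.W : ℝ) * ((d.W : ℝ) - 1))) * ((d.Wa z.1 : ℝ)⁻¹ * (d.Wa z'.1 : ℝ)⁻¹)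
        * (∑ w' ∈ univ.erase w, d.U w z * d.U w' z') := by
    intro w
    rw [Finset.mul_sum]
  rw [Finset.sum_congr rfl (fun w _ => h4 w), ← Finset.mul_sum, d.sum_mul_erase]

lemma expect_zero : d.expect (fun _ => (0:ℝ)) = 0 := by simp [Design.expect]

lemma sum_IG (ω : d.Assign) (z : T) :
    (∑ w, (if ω.1 w = z.1 then (1:ℝ) else 0) * (d.alpha w * d.G z w (ω.2 w)))
      = (d.Wa z.1 : ℝ) * d.Yht ω z := by
  rw [d.Yht_eq ω z, Finset.mul_sum]
  apply Finset.sum_congr rfl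
  intro w _
  by_cases h : ω.1 w = z.1
  · simp only [if_pos h, one_mul]
    have h2 : (d.Wa z.1 : ℝ) * ((d.Wa z.1 : ℝ)⁻¹ * d.alpha w * d.G z w (ω.2 w))
        = ((d.Wa z.1 : ℝ) * (d.Wa z.1 : ℝ)⁻¹) * (d.alpha w * d.G z w (ω.2 w)) := by ring
    rw [h2, mul_inv_cancel₀ (d.War_ne z.1), one_mul]
  · simp only [if_neg h, zero_mul, mul_zero]

lemma Vht_point {ω : d.Assign} (hω : ω ∈ d.Ω) {z z' : T} (hzz : z.1 = z'.1) :
    d.Vht ω z z' = (d.Wa z.1 : ℝ)⁻¹ * (((d.Wa z.1 : ℝ) - 1)⁻¹ *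
      ((∑ w, (if ω.1 w = z.1 then (1:ℝ) else 0) *
          (d.alpha w ^ 2 * (d.G z w (ω.2 w) * d.G z' w (ω.2 w))))
        - (d.Wa z.1 : ℝ) * (d.Yht ω z * d.Yht ω z'))) := by
  have hYw' : ∀ w, d.Yw ω w z' = (if ω.1 w = z.1 then (1:ℝ) else 0) * d.G z' w (ω.2 w) := by
    intro w
    rw [d.Yw_eq ω w z', ← hzz]
  have hYht' := d.Yht_eq ω z'
  rw [← hzz] at hYht'
  have hS : (∑ w, if ω.1 w = z.1 then
        (d.alpha w * d.Yw ω w z - d.Yht ω z) * (d.alpha w * d.Yw ω w z' - d.Yht ω z')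
      else 0)
      = (∑ w, (if ω.1 w = z.1 then (1:ℝ) else 0) *
          (d.alpha w ^ 2 * (d.G z w (ω.2 w) * d.G z' w (ω.2 w))))
        - (d.Wa z.1 : ℝ) * (d.Yht ω z * d.Yht ω z') := by
    have hterm : ∀ w : Fin d.W, (if ω.1 w = z.1 then
          (d.alpha w * d.Yw ω w z - d.Yht ω z) * (d.alpha w * d.Yw ω w z' - d.Yht ω z')
        else 0)
        = (if ω.1 w = z.1 then (1:ℝ) else 0) *
            (d.alpha w ^ 2 * (d.G z w (ω.2 w) * d.G z' w (ω.2 w)))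
          - d.Yht ω z' * ((if ω.1 w = z.1 then (1:ℝ) else 0) *
              (d.alpha w * d.G z w (ω.2 w)))
          - d.Yht ω z * ((if ω.1 w = z.1 then (1:ℝ) else 0) *
              (d.alpha w * d.G z' w (ω.2 w)))
          + (if ω.1 w = z.1 then (1:ℝ) else 0) * (d.Yht ω z * d.Yht ω z') := by
      intro w
      rw [d.Yw_eq ω w z, hYw' w]
      by_cases h : ω.1 w = z.1
      · simp only [if_pos h]
        ring
      · simp only [if_neg h]
        ring
    rw [Finset.sum_congr rfl (fun w _ => hterm w), Finset.sum_add_distrib,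
      Finset.sum_sub_distrib, Finset.sum_sub_distrib, ← Finset.mul_sum, ← Finset.mul_sum,
      ← Finset.sum_mul, d.sum_IG ω z, d.count_A hω z.1]
    have hIG' : (∑ w, (if ω.1 w = z.1 then (1:ℝ) else 0) *
        (d.alpha w * d.G z' w (ω.2 w))) = (d.Wa z.1 : ℝ) * d.Yht ω z' := by
      rw [hYht', Finset.mul_sum]
      apply Finset.sum_congr rfl
      intro w _
      by_cases h : ω.1 w = z.1
      · simp only [if_pos h, one_mul]
        have h2 : (d.Wa z.1 : ℝ) * ((d.Wa z.1 : ℝ)⁻¹ * d.alpha w * d.G z' w (ω.2 w))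
            = ((d.Wa z.1 : ℝ) * (d.Wa z.1 : ℝ)⁻¹) * (d.alpha w * d.G z' w (ω.2 w)) := by
          ring
        rw [h2, mul_inv_cancel₀ (d.War_ne z.1), one_mul]
      · simp only [if_neg h, zero_mul, mul_zero]
    rw [hIG']
    ring
  show (Matrix.of fun z z' : T =>
      if z.1 = z'.1 then (d.Wa z.1 : ℝ)⁻¹ * d.ShtHat ω z z' else 0) z z' = _
  rw [Matrix.of_apply, if_pos hzz, Design.ShtHat, hS]

lemma expect_Vht {z z' : T} (hzz : z.1 = z'.1) :
    d.expect (fun ω => d.Vht ω z z')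
      = (d.Wa z.1 : ℝ)⁻¹ * (((d.Wa z.1 : ℝ) - 1)⁻¹ *
          (d.p z.1 * (∑ w, d.alpha w ^ 2 * d.ee w z z')
            - (d.Wa z.1 : ℝ) * d.expect (fun ω => d.Yht ω z * d.Yht ω z'))) := by
  rw [d.expect_congr (fun ω hω => d.Vht_point hω hzz), d.expect_const_mul,
    d.expect_const_mul, d.expect_sub, d.expect_const_mul, d.expect_sum]
  have h1 : ∀ w : Fin d.W, d.expect (fun ω => (if ω.1 w = z.1 then (1:ℝ) else 0) *
        (d.alpha w ^ 2 * (d.G z w (ω.2 w) * d.G z' w (ω.2 w))))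
      = d.p z.1 * (d.alpha w ^ 2 * d.ee w z z') := by
    intro w
    rw [d.expect_one (fun α => if α w = z.1 then (1:ℝ) else 0) w
        (fun β => d.alpha w ^ 2 * (d.G z w β * d.G z' w β)),
      d.AE_ind w z.1, d.BE_const_mul w _ (fun β => d.G z w β * d.G z' w β), Design.ee]
  rw [Finset.sum_congr rfl (fun w _ => h1 w), ← Finset.mul_sum]

lemma Sht_eq (z z' : T) :
    d.Sht z z' = ((d.W : ℝ) - 1)⁻¹ * ((∑ w, d.U w z * d.U w z')
      - (d.W : ℝ)⁻¹ * ((∑ w, d.U w z) * (∑ w, d.U w z'))) := by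
  rw [Design.Sht]
  congr 1
  have hz := d.Ybar_eq z
  have hz' := d.Ybar_eq z'
  calc ∑ w, (d.alpha w * d.Ybarw w z - d.Ybar z) * (d.alpha w * d.Ybarw w z' - d.Ybar z')
      = ∑ w, (d.U w z * d.U w z' - d.Ybar z' * d.U w z - d.Ybar z * d.U w z'
          + d.Ybar z * d.Ybar z') := by
        apply Finset.sum_congr rfl
        intro w _
        rw [Design.U, Design.U]
        ring
    _ = (∑ w, d.U w z * d.U w z') - d.Ybar z' * (∑ w, d.U w z)
          - d.Ybar z * (∑ w, d.U w z') + (d.W : ℝ) * (d.Ybar z * d.Ybar z') := by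
        rw [Finset.sum_add_distrib, Finset.sum_sub_distrib, Finset.sum_sub_distrib,
          ← Finset.mul_sum, ← Finset.mul_sum, Finset.sum_const, Finset.card_univ,
          Fintype.card_fin, nsmul_eq_mul]
    _ = (∑ w, d.U w z * d.U w z')
          - (d.W : ℝ)⁻¹ * ((∑ w, d.U w z) * (∑ w, d.U w z')) := by
        rw [hz, hz']
        have hc : (d.W : ℝ) * (((d.W : ℝ)⁻¹ * ∑ w, d.U w z) * ((d.W : ℝ)⁻¹ * ∑ w, d.U w z'))
            = (d.W : ℝ)⁻¹ * ((∑ w, d.U w z) * (∑ w, d.U w z')) := by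
          have h2 : (d.W : ℝ) * (((d.W : ℝ)⁻¹ * ∑ w, d.U w z)
                * ((d.W : ℝ)⁻¹ * ∑ w, d.U w z'))
              = ((d.W : ℝ) * (d.W : ℝ)⁻¹) *
                ((d.W : ℝ)⁻¹ * ((∑ w, d.U w z) * (∑ w, d.U w z'))) := by ring
          rw [h2, mul_inv_cancel₀ d.Wr_ne, one_mul]
        rw [hc]
        ring

end Design


/-- Under 2² split-plot randomization, the covariance estimator
`V̂_ht` is conservative in expectation: `E[V̂_ht] − Cov(Ŷ_ht) = W⁻¹ S_ht` (entrywise),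
and the matrix `W⁻¹ S_ht` is positive semi-definite. -/
theorem vht_conservative (d : Design) :
    (∀ z z' : T,
      d.expect (fun ω => d.Vht ω z z')
          - d.cov (fun ω => d.Yht ω z) (fun ω => d.Yht ω z')
        = (d.W : ℝ)⁻¹ * d.Sht z z') ∧
    (Matrix.of fun z z' : T => (d.W : ℝ)⁻¹ * d.Sht z z').PosSemidef := by
  constructor
  · intro z z'
    simp only [Design.cov]
    by_cases hzz : z.1 = z'.1
    · rw [d.expect_Vht hzz, d.expect_Yht_mul z z', d.expect_Yht z, d.expect_Yht z',
        d.Ybar_eq z, d.Ybar_eq z', d.Sht_eq z z']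
      simp only [if_pos hzz]
      rw [show d.Wa z'.1 = d.Wa z.1 from by rw [hzz], Design.p]
      have hW := d.Wr_ne
      have hW1 := d.Wr1_ne
      have hk := d.War_ne z.1
      have hk1 := d.War1_ne z.1
      set E := ∑ x : Fin d.W, d.alpha x ^ 2 * d.ee x z z' with hE
      set S := ∑ x : Fin d.W, d.U x z * d.U x z' with hS
      set P1 := ∑ w : Fin d.W, d.U w z with hP1
      set P2 := ∑ w : Fin d.W, d.U w z' with hP2
      set k := (d.Wa z.1 : ℝ) with hkdef
      set Wr := (d.W : ℝ) with hWdef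
      field_simp
      ring
    · have h0 : (fun ω : d.Assign => d.Vht ω z z') = fun _ => (0:ℝ) := by
        funext ω
        rw [Design.Vht, Matrix.of_apply, if_neg hzz]
      rw [h0, d.expect_zero, d.expect_Yht_mul z z', d.expect_Yht z, d.expect_Yht z',
        d.Ybar_eq z, d.Ybar_eq z', d.Sht_eq z z']
      simp only [if_neg hzz]
      have hW := d.Wr_ne
      have hW1 := d.Wr1_ne
      have hk := d.War_ne z.1
      have hk' := d.War_ne z'.1
      set S := ∑ x : Fin d.W, d.U x z * d.U x z' with hS
      set P1 := ∑ w : Fin d.W, d.U w z with hP1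
      set P2 := ∑ w : Fin d.W, d.U w z' with hP2
      set k := (d.Wa z.1 : ℝ) with hkdef
      set k' := (d.Wa z'.1 : ℝ) with hkdef'
      set Wr := (d.W : ℝ) with hWdef
      field_simp
      ring
  · have hsym : ∀ z z' : T, d.Sht z z' = d.Sht z' z := by
      intro z z'
      rw [Design.Sht, Design.Sht]
      congr 1
      apply Finset.sum_congr rfl
      intro w _
      ring
    rw [Matrix.posSemidef_iff_dotProduct_mulVec]
    constructor
    · show (Matrix.of fun z z' : T => (d.W : ℝ)⁻¹ * d.Sht z z').conjTranspose = _
      ext z z'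
      rw [Matrix.conjTranspose_apply, Matrix.of_apply, Matrix.of_apply, star_trivial,
        hsym z' z]
    · intro x
      have hstar : star x = x := by
        funext z
        rw [Pi.star_apply, star_trivial]
      rw [hstar]
      have hgoal : dotProduct x
          ((Matrix.of fun z z' : T => (d.W : ℝ)⁻¹ * d.Sht z z').mulVec x)
          = ∑ w, ((d.W : ℝ)⁻¹ * ((d.W : ℝ) - 1)⁻¹) *
              (∑ z : T, x z * (d.alpha w * d.Ybarw w z - d.Ybar z)) ^ 2 := by
        rw [dotProduct]
        have hmv : ∀ z : T, (Matrix.of fun z z' : T => (d.W : ℝ)⁻¹ * d.Sht z z').mulVec x z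
            = ∑ w, ((d.W : ℝ)⁻¹ * ((d.W : ℝ) - 1)⁻¹) *
                ((d.alpha w * d.Ybarw w z - d.Ybar z) *
                  (∑ z' : T, x z' * (d.alpha w * d.Ybarw w z' - d.Ybar z'))) := by
          intro z
          rw [Matrix.mulVec, dotProduct]
          have h1 : ∀ z' : T, (Matrix.of fun z z' : T => (d.W : ℝ)⁻¹ * d.Sht z z') z z' * x z'
              = ∑ w, ((d.W : ℝ)⁻¹ * ((d.W : ℝ) - 1)⁻¹) *
                  ((d.alpha w * d.Ybarw w z - d.Ybar z) *
                    (x z' * (d.alpha w * d.Ybarw w z' - d.Ybar z'))) := by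
            intro z'
            rw [Matrix.of_apply, Design.Sht, Finset.mul_sum, Finset.mul_sum,
              Finset.sum_mul]
            apply Finset.sum_congr rfl
            intro w _
            ring
          rw [Finset.sum_congr rfl (fun z' _ => h1 z'), Finset.sum_comm]
          apply Finset.sum_congr rfl
          intro w _
          rw [← Finset.mul_sum, ← Finset.mul_sum]
        have h2 : ∀ z : T, x z * (Matrix.of fun z z' : T =>
              (d.W : ℝ)⁻¹ * d.Sht z z').mulVec x z
            = ∑ w, ((d.W : ℝ)⁻¹ * ((d.W : ℝ) - 1)⁻¹) *
                ((x z * (d.alpha w * d.Ybarw w z - d.Ybar z)) *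
                  (∑ z' : T, x z' * (d.alpha w * d.Ybarw w z' - d.Ybar z'))) := by
          intro z
          rw [hmv z, Finset.mul_sum]
          apply Finset.sum_congr rfl
          intro w _
          ring
        rw [Finset.sum_congr rfl (fun z _ => h2 z), Finset.sum_comm]
        apply Finset.sum_congr rfl
        intro w _
        rw [← Finset.mul_sum, ← Finset.sum_mul]
        ring
      rw [hgoal]
      apply Finset.sum_nonneg
      intro w _
      apply mul_nonneg
      · apply mul_nonneg
        · exact inv_nonneg.mpr (Nat.cast_nonneg _)
        · apply inv_nonneg.mpr
          have h2W : (2 : ℝ) ≤ (d.W : ℝ) := by exact_mod_cast d.two_le_W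
          linarith
      · exact sq_nonneg _


end SplitPlotPaper
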